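/- Let μ > 0, ν ≥ 0, and let Z, S, C, X be fixed real m × n matrices. Define Q = (1/(ν+1))(Z - S + νC - X). Then the singular value thresholding operator D_{1/(μ(ν+1))}(Q) minimizes over L the function (1/μ)‖L‖_* + (1/2)‖L + S - Z + X‖_F² + (ν/2)‖L - C‖_F². -/

import Mathlib

open Matrix BigOperators

noncomputable def singVal {m n : ℕ} (M : Matrix (Fin m) (Fin n) ℝ) (i : Fin n) : ℝ :=
  Real.sqrt ((show (Mᵀ * M).IsHermitian by
    simpa using Matrix.isHermitian_conjTranspose_mul_self M).eigenvalues i)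

noncomputable def nuclearNorm {m n : ℕ} (M : Matrix (Fin m) (Fin n) ℝ) : ℝ :=
  ∑ i, singVal M i

noncomputable def frobNorm {m n : ℕ} (M : Matrix (Fin m) (Fin n) ℝ) : ℝ :=
  Real.sqrt (Matrix.trace (Mᵀ * M))

noncomputable def finner {m n : ℕ} (A B : Matrix (Fin m) (Fin n) ℝ) : ℝ :=
  Matrix.trace (Aᵀ * B)

noncomputable def opNorm {m n : ℕ} (M : Matrix (Fin m) (Fin n) ℝ) : ℝ :=
  ‖LinearMap.toContinuousLinearMap (Matrix.toEuclideanLin M)‖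

namespace SVTaux

lemma isHermitian_transpose_mul_self {m n : ℕ} (M : Matrix (Fin m) (Fin n) ℝ) :
    (Mᵀ * M).IsHermitian := by
  simpa using Matrix.isHermitian_conjTranspose_mul_self M

noncomputable def mip {m n : ℕ} (A B : Matrix (Fin m) (Fin n) ℝ) : ℝ := ∑ i, ∑ j, A i j * B i j

lemma mip_comm {m n : ℕ} (A B : Matrix (Fin m) (Fin n) ℝ) : mip A B = mip B A := by
  simp [mip, mul_comm]

lemma mip_self_nonneg {m n : ℕ} (A : Matrix (Fin m) (Fin n) ℝ) : 0 ≤ mip A A :=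
  Finset.sum_nonneg fun _ _ => Finset.sum_nonneg fun _ _ => mul_self_nonneg _

lemma trace_mip {m n : ℕ} (A B : Matrix (Fin m) (Fin n) ℝ) :
    Matrix.trace (Aᵀ * B) = mip A B := by
  simp only [Matrix.trace, Matrix.diag, Matrix.mul_apply, Matrix.transpose_apply, mip]
  exact Finset.sum_comm

lemma frob_sq {m n : ℕ} (A : Matrix (Fin m) (Fin n) ℝ) : frobNorm A ^ 2 = mip A A := by
  rw [frobNorm, trace_mip, Real.sq_sqrt (mip_self_nonneg A)]

lemma dp_self_nonneg {k : ℕ} (x : Fin k → ℝ) : 0 ≤ x ⬝ᵥ x :=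
  Finset.sum_nonneg fun _ _ => mul_self_nonneg _

lemma dp_cs {k : ℕ} (x y : Fin k → ℝ) :
    x ⬝ᵥ y ≤ Real.sqrt (x ⬝ᵥ x) * Real.sqrt (y ⬝ᵥ y) := by
  have h := Finset.sum_mul_sq_le_sq_mul_sq Finset.univ x y
  have h1 : x ⬝ᵥ y ≤ Real.sqrt ((∑ i, x i * y i) ^ 2) := by
    rw [Real.sqrt_sq_eq_abs]; exact le_abs_self _
  calc x ⬝ᵥ y ≤ Real.sqrt ((∑ i, x i * y i) ^ 2) := h1
    _ ≤ Real.sqrt ((∑ i, x i ^ 2) * ∑ i, y i ^ 2) := Real.sqrt_le_sqrt h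
    _ = Real.sqrt (x ⬝ᵥ x) * Real.sqrt (y ⬝ᵥ y) := by
        rw [Real.sqrt_mul (by positivity)]
        simp [dotProduct, pow_two]

lemma contract {k r : ℕ} {U : Matrix (Fin k) (Fin r) ℝ} (hU : Uᵀ * U = 1) (p : Fin k → ℝ) :
    (Uᵀ *ᵥ p) ⬝ᵥ (Uᵀ *ᵥ p) ≤ p ⬝ᵥ p := by
  set z := Uᵀ *ᵥ p with hz
  have h1 : p ⬝ᵥ (U *ᵥ z) = z ⬝ᵥ z := by
    rw [Matrix.dotProduct_mulVec, ← Matrix.mulVec_transpose]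
  have h2 : (U *ᵥ z) ⬝ᵥ (U *ᵥ z) = z ⬝ᵥ z := by
    rw [Matrix.dotProduct_mulVec, ← Matrix.mulVec_transpose, Matrix.mulVec_mulVec, hU,
      Matrix.one_mulVec]
  have hcs := dp_cs p (U *ᵥ z)
  rw [h1, h2] at hcs
  have hzz : 0 ≤ z ⬝ᵥ z := dp_self_nonneg z
  have hpp : 0 ≤ p ⬝ᵥ p := dp_self_nonneg p
  nlinarith [Real.sq_sqrt hzz, Real.sq_sqrt hpp, Real.sqrt_nonneg (z ⬝ᵥ z),
    Real.sqrt_nonneg (p ⬝ᵥ p), sq_nonneg (Real.sqrt (p ⬝ᵥ p) - Real.sqrt (z ⬝ᵥ z))]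

lemma svt_inner_expand {k l r : ℕ} (U : Matrix (Fin k) (Fin r) ℝ) (V : Matrix (Fin l) (Fin r) ℝ)
    (a : Fin r → ℝ) (p : Fin k → ℝ) (y : Fin l → ℝ) :
    p ⬝ᵥ ((U * Matrix.diagonal a * Vᵀ) *ᵥ y)
      = ∑ i, a i * ((Uᵀ *ᵥ p) i * (Vᵀ *ᵥ y) i) := by
  rw [← Matrix.mulVec_mulVec, ← Matrix.mulVec_mulVec, Matrix.dotProduct_mulVec,
    ← Matrix.mulVec_transpose]
  simp only [dotProduct, Matrix.mulVec_diagonal]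
  exact Finset.sum_congr rfl fun i _ => by ring

lemma op_bound {k l r : ℕ} {U : Matrix (Fin k) (Fin r) ℝ} {V : Matrix (Fin l) (Fin r) ℝ}
    (hU : Uᵀ * U = 1) (hV : Vᵀ * V = 1) {a : Fin r → ℝ} {τ : ℝ} (hτ : 0 ≤ τ)
    (ha : ∀ i, 0 ≤ a i ∧ a i ≤ τ) (p : Fin k → ℝ) (y : Fin l → ℝ) :
    p ⬝ᵥ ((U * Matrix.diagonal a * Vᵀ) *ᵥ y)
      ≤ τ * (Real.sqrt (p ⬝ᵥ p) * Real.sqrt (y ⬝ᵥ y)) := by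
  rw [svt_inner_expand]
  set P := Uᵀ *ᵥ p with hP
  set Y := Vᵀ *ᵥ y with hY
  have step1 : ∑ i, a i * (P i * Y i) ≤ τ * ((fun i => |P i|) ⬝ᵥ (fun i => |Y i|)) := by
    rw [dotProduct, Finset.mul_sum]
    refine Finset.sum_le_sum fun i _ => ?_
    have h1 : a i * (P i * Y i) ≤ a i * |P i * Y i| :=
      mul_le_mul_of_nonneg_left (le_abs_self _) (ha i).1
    have h2 : a i * |P i * Y i| ≤ τ * |P i * Y i| :=
      mul_le_mul_of_nonneg_right (ha i).2 (abs_nonneg _)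
    calc a i * (P i * Y i) ≤ τ * |P i * Y i| := h1.trans h2
      _ = τ * (|P i| * |Y i|) := by rw [abs_mul]
  have step2 : (fun i => |P i|) ⬝ᵥ (fun i => |Y i|)
      ≤ Real.sqrt (P ⬝ᵥ P) * Real.sqrt (Y ⬝ᵥ Y) := by
    have := dp_cs (fun i => |P i|) (fun i => |Y i|)
    simpa [dotProduct, abs_mul_abs_self] using this
  have step3 : Real.sqrt (P ⬝ᵥ P) ≤ Real.sqrt (p ⬝ᵥ p) := Real.sqrt_le_sqrt (contract hU p)
  have step4 : Real.sqrt (Y ⬝ᵥ Y) ≤ Real.sqrt (y ⬝ᵥ y) := Real.sqrt_le_sqrt (contract hV y)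
  have := mul_le_mul step3 step4 (Real.sqrt_nonneg _) (Real.sqrt_nonneg _)
  nlinarith [Real.sqrt_nonneg (P ⬝ᵥ P), Real.sqrt_nonneg (Y ⬝ᵥ Y), step2,
    mul_le_mul_of_nonneg_left (step2.trans this) hτ]


section Spectral

variable {m n : ℕ} (M : Matrix (Fin m) (Fin n) ℝ)

noncomputable def eigW : Matrix (Fin n) (Fin n) ℝ :=
  (Matrix.IsHermitian.eigenvectorUnitary (SVTaux.isHermitian_transpose_mul_self M) :
    Matrix (Fin n) (Fin n) ℝ)

noncomputable def eigw (j : Fin n) : Fin n → ℝ := fun i => eigW M i j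

lemma eigW_star : star (eigW M) = (eigW M)ᵀ := by
  rw [Matrix.star_eq_conjTranspose, Matrix.conjTranspose_eq_transpose_of_trivial]

lemma eigW_orth : (eigW M)ᵀ * eigW M = 1 := by
  rw [← eigW_star]
  exact Matrix.mem_unitaryGroup_iff'.mp
    (Matrix.IsHermitian.eigenvectorUnitary (SVTaux.isHermitian_transpose_mul_self M)).2

lemma eigW_orth' : eigW M * (eigW M)ᵀ = 1 := by
  rw [← eigW_star]
  exact Matrix.mem_unitaryGroup_iff.mp
    (Matrix.IsHermitian.eigenvectorUnitary (SVTaux.isHermitian_transpose_mul_self M)).2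

lemma eigw_dot (i j : Fin n) :
    eigw M i ⬝ᵥ eigw M j = if i = j then 1 else 0 := by
  have h := congrFun (congrFun (eigW_orth M) i) j
  simpa [Matrix.mul_apply, Matrix.transpose_apply, Matrix.one_apply, dotProduct, eigw] using h

lemma eigw_basis_eq (j : Fin n) :
    ⇑((SVTaux.isHermitian_transpose_mul_self M).eigenvectorBasis j) = eigw M j := by
  funext i
  rw [eigw, eigW, ← Matrix.IsHermitian.eigenvectorUnitary_apply]

lemma eigw_eigen (j : Fin n) :
    (Mᵀ * M) *ᵥ eigw M j
      = ((SVTaux.isHermitian_transpose_mul_self M).eigenvalues j) • eigw M j := by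
  have h := Matrix.IsHermitian.mulVec_eigenvectorBasis
    (SVTaux.isHermitian_transpose_mul_self M) j
  rw [eigw_basis_eq] at h
  rw [← h]

lemma Mw_dot (i j : Fin n) :
    (M *ᵥ eigw M i) ⬝ᵥ (M *ᵥ eigw M j)
      = if i = j then (SVTaux.isHermitian_transpose_mul_self M).eigenvalues i else 0 := by
  rw [Matrix.dotProduct_mulVec, ← Matrix.mulVec_transpose, Matrix.mulVec_mulVec, eigw_eigen,
    smul_dotProduct, eigw_dot]
  by_cases h : i = j <;> simp [h]

lemma singVal_sq (j : Fin n) :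
    singVal M j ^ 2 = (M *ᵥ eigw M j) ⬝ᵥ (M *ᵥ eigw M j) := by
  rw [Mw_dot, if_pos rfl, singVal,
    Real.sq_sqrt (by have h := Mw_dot M j j; rw [if_pos rfl] at h; rw [← h]; exact dp_self_nonneg _)]

lemma singVal_eq_sqrt (j : Fin n) :
    singVal M j = Real.sqrt ((M *ᵥ eigw M j) ⬝ᵥ (M *ᵥ eigw M j)) := by
  rw [Mw_dot, if_pos rfl]; rfl

lemma sum_quad_eq_trace (B : Matrix (Fin n) (Fin n) ℝ) :
    ∑ j, eigw M j ⬝ᵥ (B *ᵥ eigw M j) = Matrix.trace B := by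
  have h1 : ∀ j, eigw M j ⬝ᵥ (B *ᵥ eigw M j) = ((eigW M)ᵀ * B * eigW M) j j := by
    intro j
    simp only [Matrix.mul_apply, Matrix.transpose_apply, Matrix.mulVec, dotProduct, eigw,
      Finset.sum_mul, Finset.mul_sum]
    rw [Finset.sum_comm]
    exact Finset.sum_congr rfl fun a _ => Finset.sum_congr rfl fun b _ => by ring
  calc ∑ j, eigw M j ⬝ᵥ (B *ᵥ eigw M j) = ∑ j, ((eigW M)ᵀ * B * eigW M) j j :=
        Finset.sum_congr rfl fun j _ => h1 j
    _ = Matrix.trace ((eigW M)ᵀ * (B * eigW M)) := by rw [Matrix.trace, mul_assoc]; rfl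
    _ = Matrix.trace (B * eigW M * (eigW M)ᵀ) := by rw [Matrix.trace_mul_comm]
    _ = Matrix.trace B := by rw [mul_assoc, eigW_orth', mul_one]

lemma mip_decomp (G : Matrix (Fin m) (Fin n) ℝ) :
    mip G M = ∑ j, (M *ᵥ eigw M j) ⬝ᵥ (G *ᵥ eigw M j) := by
  rw [← trace_mip, ← sum_quad_eq_trace M (Gᵀ * M)]
  refine Finset.sum_congr rfl fun j _ => ?_
  rw [← Matrix.mulVec_mulVec, Matrix.dotProduct_mulVec, Matrix.vecMul_transpose,
    dotProduct_comm]

lemma mip_dual {r : ℕ} {U : Matrix (Fin m) (Fin r) ℝ} {V : Matrix (Fin n) (Fin r) ℝ}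
    (hU : Uᵀ * U = 1) (hV : Vᵀ * V = 1) {a : Fin r → ℝ} {τ : ℝ} (hτ : 0 ≤ τ)
    (ha : ∀ i, 0 ≤ a i ∧ a i ≤ τ) (L : Matrix (Fin m) (Fin n) ℝ) :
    mip (U * Matrix.diagonal a * Vᵀ) L ≤ τ * nuclearNorm L := by
  rw [mip_decomp L, nuclearNorm, Finset.mul_sum]
  refine Finset.sum_le_sum fun j _ => ?_
  calc (L *ᵥ eigw L j) ⬝ᵥ ((U * Matrix.diagonal a * Vᵀ) *ᵥ eigw L j)
      ≤ τ * (Real.sqrt ((L *ᵥ eigw L j) ⬝ᵥ (L *ᵥ eigw L j))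
          * Real.sqrt (eigw L j ⬝ᵥ eigw L j)) := op_bound hU hV hτ ha _ _
    _ = τ * singVal L j := by
        rw [eigw_dot, if_pos rfl, Real.sqrt_one, mul_one, ← singVal_eq_sqrt]

end Spectral

lemma dp_sum_right {k N : ℕ} (x : Fin k → ℝ) (f : Fin N → Fin k → ℝ) :
    x ⬝ᵥ (∑ i, f i) = ∑ i, x ⬝ᵥ f i := by
  simp only [dotProduct, Finset.sum_apply, Finset.mul_sum]
  exact Finset.sum_comm

lemma dp_sum_left {k N : ℕ} (x : Fin k → ℝ) (f : Fin N → Fin k → ℝ) :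
    (∑ i, f i) ⬝ᵥ x = ∑ i, f i ⬝ᵥ x := by
  simp only [dotProduct, Finset.sum_apply, Finset.sum_mul]
  exact Finset.sum_comm

lemma bessel {N k : ℕ} (u : Fin N → Fin k → ℝ)
    (horth : ∀ i j, i ≠ j → u i ⬝ᵥ u j = 0) (hn : ∀ i, u i ⬝ᵥ u i ≤ 1) (x : Fin k → ℝ) :
    ∑ i, (x ⬝ᵥ u i) ^ 2 ≤ x ⬝ᵥ x := by
  set c : Fin N → ℝ := fun i => x ⬝ᵥ u i with hc
  set S : Fin k → ℝ := ∑ i, c i • u i with hS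
  have key : 0 ≤ (x - S) ⬝ᵥ (x - S) := dp_self_nonneg _
  have hxS : x ⬝ᵥ S = ∑ i, c i ^ 2 := by
    rw [hS, dp_sum_right]
    exact Finset.sum_congr rfl fun i _ => by
      simp only [dotProduct_smul, smul_eq_mul, hc]; ring
  have hSx : S ⬝ᵥ x = ∑ i, c i ^ 2 := by rw [dotProduct_comm]; exact hxS
  have hSS : S ⬝ᵥ S = ∑ i, c i ^ 2 * (u i ⬝ᵥ u i) := by
    rw [hS, dp_sum_left]
    refine Finset.sum_congr rfl fun i _ => ?_
    rw [smul_dotProduct, dp_sum_right, smul_eq_mul]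
    rw [Finset.sum_eq_single i (fun j _ hji => by
      rw [dotProduct_smul, horth i j (Ne.symm hji), smul_zero]) (by simp)]
    rw [dotProduct_smul, smul_eq_mul]; ring
  have hSS' : S ⬝ᵥ S ≤ ∑ i, c i ^ 2 := by
    rw [hSS]
    refine Finset.sum_le_sum fun i _ => ?_
    have h0 : 0 ≤ u i ⬝ᵥ u i := dp_self_nonneg _
    nlinarith [sq_nonneg (c i), hn i]
  have expand : (x - S) ⬝ᵥ (x - S) = x ⬝ᵥ x - 2 * ∑ i, c i ^ 2 + S ⬝ᵥ S := by
    rw [sub_dotProduct, dotProduct_sub, dotProduct_sub, hxS, hSx]; ring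
  rw [expand] at key
  linarith

lemma nuclear_le {m n r : ℕ} {U : Matrix (Fin m) (Fin r) ℝ} {V : Matrix (Fin n) (Fin r) ℝ}
    (hU : Uᵀ * U = 1) (hV : Vᵀ * V = 1) {b : Fin r → ℝ} (hb : ∀ i, 0 ≤ b i)
    {D : Matrix (Fin m) (Fin n) ℝ} (hD : D = U * Matrix.diagonal b * Vᵀ) :
    nuclearNorm D ≤ ∑ i, b i := by
  classical
  set u : Fin n → Fin m → ℝ := fun j =>
    if singVal D j = 0 then 0 else (singVal D j)⁻¹ • (D *ᵥ eigw D j) with hu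
  have hsv : ∀ j, 0 ≤ singVal D j := fun j => Real.sqrt_nonneg _
  have huD : ∀ j, u j ⬝ᵥ (D *ᵥ eigw D j) = singVal D j := by
    intro j
    by_cases h : singVal D j = 0
    · simp [hu, h, zero_dotProduct]
    · rw [hu]
      simp only [h, if_false]
      rw [smul_dotProduct, ← singVal_sq D j, smul_eq_mul]
      field_simp
  have huu : ∀ i j, i ≠ j → u i ⬝ᵥ u j = 0 := by
    intro i j hij
    rw [hu]
    by_cases hi : singVal D i = 0
    · simp [hi, zero_dotProduct]
    by_cases hj : singVal D j = 0
    · simp [hi, hj, dotProduct_zero]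
    simp only [hi, hj, if_false]
    rw [smul_dotProduct, dotProduct_smul, Mw_dot D i j, if_neg hij]
    simp
  have hun : ∀ j, u j ⬝ᵥ u j ≤ 1 := by
    intro j
    rw [hu]
    by_cases h : singVal D j = 0
    · simp [h, zero_dotProduct]
    simp only [h, if_false]
    rw [smul_dotProduct, dotProduct_smul, ← singVal_sq D j, smul_eq_mul, smul_eq_mul]
    have h2 : singVal D j ^ 2 ≠ 0 := pow_ne_zero _ h
    field_simp
    exact le_rfl
  -- step 1 : nuclearNorm D = ∑ j, u j ⬝ᵥ (D *ᵥ eigw D j)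
  have step1 : nuclearNorm D = ∑ j, u j ⬝ᵥ (D *ᵥ eigw D j) := by
    rw [nuclearNorm]
    exact Finset.sum_congr rfl fun j _ => (huD j).symm
  -- step 2 : expand via hD
  have step2 : ∀ j, u j ⬝ᵥ (D *ᵥ eigw D j)
      = ∑ k, b k * ((Uᵀ *ᵥ u j) k * (Vᵀ *ᵥ eigw D j) k) := by
    intro j
    conv_lhs => rw [show D *ᵥ eigw D j = (U * Matrix.diagonal b * Vᵀ) *ᵥ eigw D j by rw [← hD]]
    exact svt_inner_expand U V b (u j) (eigw D j)
  rw [step1, Finset.sum_congr rfl fun j _ => step2 j, Finset.sum_comm]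
  refine Finset.sum_le_sum fun k _ => ?_
  -- bound ∑ j, b k * (α j * β j) ≤ b k
  have hβ : ∑ j, ((Vᵀ *ᵥ eigw D j) k) ^ 2 = 1 := by
    have hent : ∀ j, (Vᵀ *ᵥ eigw D j) k = (Vᵀ * eigW D) k j := by
      intro j
      simp [Matrix.mulVec, Matrix.mul_apply, dotProduct, eigw]
    rw [Finset.sum_congr rfl fun j _ => by rw [hent j]]
    have hmm : (Vᵀ * eigW D) * (Vᵀ * eigW D)ᵀ = 1 := by
      rw [Matrix.transpose_mul, Matrix.transpose_transpose, Matrix.mul_assoc,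
        ← Matrix.mul_assoc (eigW D), eigW_orth', Matrix.one_mul, hV]
    have h := congrFun (congrFun hmm k) k
    simp only [Matrix.mul_apply, Matrix.transpose_apply, Matrix.one_apply_eq] at h
    rw [← h]
    exact Finset.sum_congr rfl fun j _ => by
      simp [Matrix.mul_apply, Matrix.transpose_apply, pow_two]
  have hα : ∑ j, ((Uᵀ *ᵥ u j) k) ^ 2 ≤ 1 := by
    have hent : ∀ j, (Uᵀ *ᵥ u j) k = (fun i => U i k) ⬝ᵥ u j := by
      intro j
      simp [Matrix.mulVec, dotProduct]
    rw [Finset.sum_congr rfl fun j _ => by rw [hent j]]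
    have hx : (fun i => U i k) ⬝ᵥ (fun i => U i k) = 1 := by
      have h := congrFun (congrFun hU k) k
      simpa [Matrix.mul_apply, Matrix.transpose_apply, Matrix.one_apply_eq, dotProduct] using h
    calc ∑ j, ((fun i => U i k) ⬝ᵥ u j) ^ 2 ≤ (fun i => U i k) ⬝ᵥ (fun i => U i k) :=
          bessel u huu hun _
      _ = 1 := hx
  -- combine with Cauchy-Schwarz
  have hcs : ∑ j, ((Uᵀ *ᵥ u j) k) * ((Vᵀ *ᵥ eigw D j) k) ≤ 1 := by
    have h := Finset.sum_mul_sq_le_sq_mul_sq Finset.univ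
      (fun j => (Uᵀ *ᵥ u j) k) (fun j => (Vᵀ *ᵥ eigw D j) k)
    have h2 : (∑ j, ((Uᵀ *ᵥ u j) k) * ((Vᵀ *ᵥ eigw D j) k)) ^ 2 ≤ 1 := by
      calc (∑ j, ((Uᵀ *ᵥ u j) k) * ((Vᵀ *ᵥ eigw D j) k)) ^ 2
          ≤ (∑ j, ((Uᵀ *ᵥ u j) k) ^ 2) * ∑ j, ((Vᵀ *ᵥ eigw D j) k) ^ 2 := h
        _ ≤ 1 := by
            rw [hβ, mul_one]
            exact hα
    nlinarith [h2]
  calc ∑ j, b k * ((Uᵀ *ᵥ u j) k * (Vᵀ *ᵥ eigw D j) k)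
      = b k * ∑ j, ((Uᵀ *ᵥ u j) k) * ((Vᵀ *ᵥ eigw D j) k) := by rw [Finset.mul_sum]
    _ ≤ b k * 1 := mul_le_mul_of_nonneg_left hcs (hb k)
    _ = b k := mul_one _

lemma mip_svt {m n r : ℕ} {U : Matrix (Fin m) (Fin r) ℝ} {V : Matrix (Fin n) (Fin r) ℝ}
    (hU : Uᵀ * U = 1) (hV : Vᵀ * V = 1) (a b : Fin r → ℝ) :
    mip (U * Matrix.diagonal a * Vᵀ) (U * Matrix.diagonal b * Vᵀ) = ∑ i, a i * b i := by
  rw [← trace_mip, Matrix.transpose_mul, Matrix.transpose_mul, Matrix.transpose_transpose,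
    Matrix.diagonal_transpose]
  simp only [Matrix.mul_assoc]
  rw [← Matrix.mul_assoc Uᵀ U, hU, Matrix.one_mul, Matrix.trace_mul_comm]
  simp only [Matrix.mul_assoc]
  rw [hV, Matrix.mul_one, Matrix.diagonal_mul_diagonal, Matrix.trace_diagonal]

lemma quad_expand {m n : ℕ} (Xm Ym B : Matrix (Fin m) (Fin n) ℝ) :
    mip (Xm - B) (Xm - B)
      = mip (Ym - B) (Ym - B) + 2 * mip (Xm - Ym) (Ym - B) + mip (Xm - Ym) (Xm - Ym) := by
  simp only [mip, Matrix.sub_apply, Finset.mul_sum, ← Finset.sum_add_distrib]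
  exact Finset.sum_congr rfl fun i _ => Finset.sum_congr rfl fun j _ => by ring

lemma mix_eq {m n : ℕ} (L D Q : Matrix (Fin m) (Fin n) ℝ) :
    mip (L - D) (D - Q) = mip (Q - D) D - mip (Q - D) L := by
  simp only [mip, Matrix.sub_apply, ← Finset.sum_sub_distrib]
  exact Finset.sum_congr rfl fun i _ => Finset.sum_congr rfl fun j _ => by ring

lemma mip_smul_right {m n : ℕ} (c : ℝ) (A B : Matrix (Fin m) (Fin n) ℝ) :
    mip A (c • B) = c * mip A B := by
  simp only [mip, Matrix.smul_apply, smul_eq_mul, Finset.mul_sum]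
  exact Finset.sum_congr rfl fun i _ => Finset.sum_congr rfl fun j _ => by ring

lemma mip_add_right {m n : ℕ} (A B C : Matrix (Fin m) (Fin n) ℝ) :
    mip A (B + C) = mip A B + mip A C := by
  simp only [mip, Matrix.add_apply, mul_add, Finset.sum_add_distrib]
end SVTaux

open SVTaux

/-- D_{1/(μ(ν+1))}(Q) with Q = (1/(ν+1))(Z - S + νC - X) minimizes
(1/μ)‖L‖_* + (1/2)‖L + S - Z + X‖_F² + (ν/2)‖L - C‖_F². -/
theorem svt_minimizes_fused_objective {m n r : ℕ} (μ ν : ℝ) (hμ : 0 < μ) (hν : 0 ≤ ν)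
    (Z S C X : Matrix (Fin m) (Fin n) ℝ)
    (Q : Matrix (Fin m) (Fin n) ℝ) (hQdef : Q = (1 / (ν + 1)) • (Z - S + ν • C - X))
    (U : Matrix (Fin m) (Fin r) ℝ) (V : Matrix (Fin n) (Fin r) ℝ) (σ : Fin r → ℝ)
    (hU : Uᵀ * U = 1) (hV : Vᵀ * V = 1) (hσ : ∀ i, 0 ≤ σ i)
    (hQ : Q = U * Matrix.diagonal σ * Vᵀ)
    (D : Matrix (Fin m) (Fin n) ℝ)
    (hD : D = U * Matrix.diagonal (fun i => max (σ i - 1 / (μ * (ν + 1))) 0) * Vᵀ) :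
    ∀ L : Matrix (Fin m) (Fin n) ℝ,
      (1/μ) * nuclearNorm D + (1/2) * (frobNorm (D + S - Z + X))^2
          + (ν/2) * (frobNorm (D - C))^2
        ≤ (1/μ) * nuclearNorm L + (1/2) * (frobNorm (L + S - Z + X))^2
          + (ν/2) * (frobNorm (L - C))^2 := by
  intro L
  have hν1 : (0:ℝ) < ν + 1 := by linarith
  set τ : ℝ := 1 / (μ * (ν + 1)) with hτdef
  have hτpos : 0 < τ := by rw [hτdef]; positivity
  set b : Fin r → ℝ := fun i => max (σ i - τ) 0 with hbdef
  set a : Fin r → ℝ := fun i => σ i - b i with hadef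
  have hb0 : ∀ i, 0 ≤ b i := fun i => le_max_right _ _
  have ha : ∀ i, 0 ≤ a i ∧ a i ≤ τ := by
    intro i
    rcases max_cases (σ i - τ) 0 with ⟨h1, h2⟩ | ⟨h1, h2⟩ <;>
      constructor <;> simp only [hadef, hbdef, h1] <;> [linarith [hτpos]; linarith [hτpos];
        linarith [hσ i]; linarith]
  have hab : ∀ i, a i * b i = τ * b i := by
    intro i
    rcases max_cases (σ i - τ) 0 with ⟨h1, h2⟩ | ⟨h1, h2⟩ <;> simp only [hadef, hbdef, h1] <;> ring
  have hGQ : Q - D = U * Matrix.diagonal a * Vᵀ := by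
    have hdiag : Matrix.diagonal σ - Matrix.diagonal b = Matrix.diagonal a := by
      rw [← Matrix.diagonal_sub]
    rw [hQ, hD, ← Matrix.sub_mul, ← Matrix.mul_sub, hdiag]
  have hQDL : mip (Q - D) L ≤ τ * nuclearNorm L := by
    rw [hGQ]; exact mip_dual hU hV hτpos.le ha L
  have hQDD : τ * nuclearNorm D ≤ mip (Q - D) D := by
    have h2 : mip (Q - D) D = τ * ∑ i, b i := by
      rw [hGQ, hD, mip_svt hU hV, Finset.sum_congr rfl fun i _ => hab i, ← Finset.mul_sum]
    have h3 : nuclearNorm D ≤ ∑ i, b i := nuclear_le hU hV hb0 hD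
    rw [h2]
    exact mul_le_mul_of_nonneg_left h3 hτpos.le
  have hτμ : (ν + 1) * τ = 1 / μ := by
    rw [hτdef]; field_simp
  -- quadratic expansion
  set A0 : Matrix (Fin m) (Fin n) ℝ := Z - S - X with hA0
  have eD1 : frobNorm (D + S - Z + X) ^ 2 = mip (D - A0) (D - A0) := by
    rw [show D + S - Z + X = D - A0 by rw [hA0]; abel, frob_sq]
  have eL1 : frobNorm (L + S - Z + X) ^ 2 = mip (L - A0) (L - A0) := by
    rw [show L + S - Z + X = L - A0 by rw [hA0]; abel, frob_sq]
  have eD2 : frobNorm (D - C) ^ 2 = mip (D - C) (D - C) := frob_sq _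
  have eL2 : frobNorm (L - C) ^ 2 = mip (L - C) (L - C) := frob_sq _
  have q1 : mip (L - A0) (L - A0)
      = mip (D - A0) (D - A0) + 2 * mip (L - D) (D - A0) + mip (L - D) (L - D) :=
    quad_expand L D A0
  have q2 : mip (L - C) (L - C)
      = mip (D - C) (D - C) + 2 * mip (L - D) (D - C) + mip (L - D) (L - D) :=
    quad_expand L D C
  have hQsmul : (ν + 1) • Q = Z - S + ν • C - X := by
    rw [hQdef, smul_smul, mul_one_div, div_self hν1.ne', one_smul]
  have hcomb : (D - A0) + ν • (D - C) = (ν + 1) • (D - Q) := by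
    rw [smul_sub (ν+1) D Q, hQsmul, hA0]
    module
  have hmixsum : mip (L - D) (D - A0) + ν * mip (L - D) (D - C)
      = (ν + 1) * mip (L - D) (D - Q) := by
    rw [← mip_smul_right ν, ← mip_add_right, hcomb, mip_smul_right]
  have hkey : (1/μ) * nuclearNorm D - (1/μ) * nuclearNorm L ≤ (ν + 1) * mip (L - D) (D - Q) := by
    have h5 : τ * nuclearNorm D - τ * nuclearNorm L ≤ mip (Q - D) D - mip (Q - D) L := by
      linarith
    have h6 := mul_le_mul_of_nonneg_left h5 hν1.le
    have h7 : (ν + 1) * (τ * nuclearNorm D - τ * nuclearNorm L)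
        = (1/μ) * nuclearNorm D - (1/μ) * nuclearNorm L := by
      rw [← hτμ]; ring
    rw [mix_eq]
    linarith
  have hsq : 0 ≤ mip (L - D) (L - D) := mip_self_nonneg _
  have hsqν : 0 ≤ ν * mip (L - D) (L - D) := mul_nonneg hν hsq
  rw [eD1, eL1, eD2, eL2, q1, q2]
  nlinarith [hkey, hmixsum, hsq, hsqν]
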